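/- Let G be a graph and let P1, P2 be vertex-disjoint paths in G. Suppose a1, a2, a3 are three consecutive vertices of P1 and b1, b2, b3 are three consecutive vertices of P2 such that a2 is adjacent to both b1 and b3, and b2 is adjacent to both a1 and a3. Then the sequences obtained from P1 by replacing a2 with b2 and from P2 by replacing b2 with a2 are again vertex-disjoint paths in G, with the same vertex sets' union, same lengths, and same endpoints as P1 and P2. -/

import Mathlib

private lemma chain'_swap {α : Type*} {R : α → α → Prop} {s t : List α} {a x y c : α}
    (h : (s ++ a :: x :: c :: t).Chain' R) (hy1 : R a y) (hy2 : R y c) :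
    (s ++ a :: y :: c :: t).Chain' R := by
  change List.IsChain R _ at h ⊢
  rw [List.isChain_append] at h ⊢
  obtain ⟨ha, hb, hc⟩ := h
  refine ⟨ha, ?_, by simpa using hc⟩
  rw [List.isChain_cons_cons, List.isChain_cons_cons] at hb ⊢
  exact ⟨hy1, hy2, hb.2.2⟩

private lemma perm_mid {α : Type*} (s t : List α) (a x c : α) :
    (s ++ a :: x :: c :: t).Perm (x :: ((s ++ [a]) ++ c :: t)) := by
  have : s ++ a :: x :: c :: t = (s ++ [a]) ++ x :: (c :: t) := by simp
  rw [this]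
  exact List.perm_middle

/-- The exchange operation: swapping the middle vertices `a2` and `b2` between two
vertex-disjoint paths (given the cross adjacencies) yields again two vertex-disjoint
paths with the same union of vertex sets, same lengths and same endpoints. Paths are
modeled as nodup lists whose consecutive elements are adjacent. -/
theorem stmt10 {V : Type*} [DecidableEq V] (G : SimpleGraph V)
    (s1 t1 s2 t2 : List V) (a1 a2 a3 b1 b2 b3 : V)
    (L1 L2 : List V)
    (hL1 : L1 = s1 ++ a1 :: a2 :: a3 :: t1)
    (hL2 : L2 = s2 ++ b1 :: b2 :: b3 :: t2)
    (hc1 : L1.Chain' G.Adj) (hn1 : L1.Nodup)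
    (hc2 : L2.Chain' G.Adj) (hn2 : L2.Nodup)
    (hdisj : ∀ x ∈ L1, x ∉ L2)
    (h1 : G.Adj a2 b1) (h2 : G.Adj a2 b3)
    (h3 : G.Adj b2 a1) (h4 : G.Adj b2 a3) :
    (s1 ++ a1 :: b2 :: a3 :: t1).Chain' G.Adj ∧ (s1 ++ a1 :: b2 :: a3 :: t1).Nodup ∧
    (s2 ++ b1 :: a2 :: b3 :: t2).Chain' G.Adj ∧ (s2 ++ b1 :: a2 :: b3 :: t2).Nodup ∧
    (∀ x ∈ (s1 ++ a1 :: b2 :: a3 :: t1), x ∉ (s2 ++ b1 :: a2 :: b3 :: t2)) ∧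
    (s1 ++ a1 :: b2 :: a3 :: t1).toFinset ∪ (s2 ++ b1 :: a2 :: b3 :: t2).toFinset
      = L1.toFinset ∪ L2.toFinset ∧
    (s1 ++ a1 :: b2 :: a3 :: t1).length = L1.length ∧
    (s2 ++ b1 :: a2 :: b3 :: t2).length = L2.length ∧
    (s1 ++ a1 :: b2 :: a3 :: t1).head? = L1.head? ∧
    (s1 ++ a1 :: b2 :: a3 :: t1).getLast? = L1.getLast? ∧
    (s2 ++ b1 :: a2 :: b3 :: t2).head? = L2.head? ∧
    (s2 ++ b1 :: a2 :: b3 :: t2).getLast? = L2.getLast? := by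
  subst hL1 hL2
  set r1 : List V := (s1 ++ [a1]) ++ a3 :: t1 with hr1
  set r2 : List V := (s2 ++ [b1]) ++ b3 :: t2 with hr2
  have p1o := perm_mid s1 t1 a1 a2 a3
  have p1n := perm_mid s1 t1 a1 b2 a3
  have p2o := perm_mid s2 t2 b1 b2 b3
  have p2n := perm_mid s2 t2 b1 a2 b3
  have hn1' : (a2 :: r1).Nodup := p1o.nodup_iff.mp hn1
  have hn2' : (b2 :: r2).Nodup := p2o.nodup_iff.mp hn2
  have ha2r1 : a2 ∉ r1 := (List.nodup_cons.mp hn1').1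
  have hb2r2 : b2 ∉ r2 := (List.nodup_cons.mp hn2').1
  have hr1n : r1.Nodup := (List.nodup_cons.mp hn1').2
  have hr2n : r2.Nodup := (List.nodup_cons.mp hn2').2
  have hmem1 : ∀ z, z ∈ r1 → z ∈ s1 ++ a1 :: a2 :: a3 :: t1 := fun z hz =>
    p1o.mem_iff.mpr (List.mem_cons_of_mem _ hz)
  have hmem2 : ∀ z, z ∈ r2 → z ∈ s2 ++ b1 :: b2 :: b3 :: t2 := fun z hz =>
    p2o.mem_iff.mpr (List.mem_cons_of_mem _ hz)
  have ha2L1 : a2 ∈ s1 ++ a1 :: a2 :: a3 :: t1 := by simp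
  have hb2L2 : b2 ∈ s2 ++ b1 :: b2 :: b3 :: t2 := by simp
  have hb2r1 : b2 ∉ r1 := fun h => hdisj b2 (hmem1 b2 h) hb2L2
  have ha2r2 : a2 ∉ r2 := fun h => hdisj a2 ha2L1 (hmem2 a2 h)
  have hab : a2 ≠ b2 := fun h => hdisj a2 ha2L1 (h ▸ hb2L2)
  refine ⟨chain'_swap hc1 h3.symm h4, ?_, chain'_swap hc2 h1.symm h2, ?_, ?_, ?_, ?_, ?_, ?_, ?_, ?_, ?_⟩
  · exact p1n.nodup_iff.mpr (List.nodup_cons.mpr ⟨hb2r1, hr1n⟩)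
  · exact p2n.nodup_iff.mpr (List.nodup_cons.mpr ⟨ha2r2, hr2n⟩)
  · intro x hx hx'
    rw [p1n.mem_iff, List.mem_cons] at hx
    rw [p2n.mem_iff, List.mem_cons] at hx'
    rcases hx with rfl | hx <;> rcases hx' with h' | h'
    · exact hab h'.symm
    · exact hb2r2 h'
    · exact ha2r1 (h' ▸ hx)
    · exact hdisj x (hmem1 x hx) (hmem2 x h')
  · ext z
    simp only [Finset.mem_union, List.mem_toFinset, p1n.mem_iff, p2n.mem_iff,
      p1o.mem_iff, p2o.mem_iff, List.mem_cons]
    tauto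
  · simp
  · simp
  · cases s1 <;> simp
  · simp [List.getLast?_append]
  · cases s2 <;> simp
  · simp [List.getLast?_append]
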